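/- For the Gaussian-kernel approximation problem under the normalized error criterion, the problem is quasi-polynomially tractable for every nonincreasing sequence (γ_k²) of positive shape parameters, and the exponent of QPT is t* = 2 / lim_{k→∞} ln((1+2γ_k²+√(1+4γ_k²))/(2γ_k²)) (the limit exists in (0,∞] by monotonicity, and t* := 0 when the limit is ∞). -/

import Mathlib

open Filter Real Set

/-- Information complexity: the number of multi-indices `(j₁,…,j_d) ∈ ℕ^d`
(here 0-indexed, so `Λ k j` stands for `λ(k+1, j+1)`) whose eigenvalue product exceeds `ε²`. -/
noncomputable def infoCount (Λ : ℕ → ℕ → ℝ) (d : ℕ) (ε : ℝ) : ℕ :=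
  Nat.card {j : Fin d → ℕ | ε ^ 2 < ∏ k : Fin d, Λ k.val (j k)}

/-- Strong polynomial tractability. -/
def IsSPT (Λ : ℕ → ℕ → ℝ) : Prop :=
  ∃ C p : ℝ, 0 ≤ C ∧ 0 ≤ p ∧ ∀ d : ℕ, 1 ≤ d → ∀ ε : ℝ, ε ∈ Set.Ioo (0 : ℝ) 1 →
    (infoCount Λ d ε : ℝ) ≤ C * ε ^ (-p)

/-- The exponent `p*` of strong polynomial tractability. -/
noncomputable def sptExponent (Λ : ℕ → ℕ → ℝ) : ℝ :=
  sInf {p : ℝ | 0 ≤ p ∧ ∃ C : ℝ, 0 ≤ C ∧ ∀ d : ℕ, 1 ≤ d → ∀ ε : ℝ, ε ∈ Set.Ioo (0 : ℝ) 1 →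
    (infoCount Λ d ε : ℝ) ≤ C * ε ^ (-p)}

/-- Polynomial tractability. -/
def IsPT (Λ : ℕ → ℕ → ℝ) : Prop :=
  ∃ C p q : ℝ, 0 ≤ C ∧ 0 ≤ p ∧ 0 ≤ q ∧ ∀ d : ℕ, 1 ≤ d → ∀ ε : ℝ, ε ∈ Set.Ioo (0 : ℝ) 1 →
    (infoCount Λ d ε : ℝ) ≤ C * (d : ℝ) ^ q * ε ^ (-p)

/-- Quasi-polynomial tractability. -/
def IsQPT (Λ : ℕ → ℕ → ℝ) : Prop :=
  ∃ C t : ℝ, 0 < C ∧ 0 < t ∧ ∀ d : ℕ, 1 ≤ d → ∀ ε : ℝ, ε ∈ Set.Ioo (0 : ℝ) 1 →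
    (infoCount Λ d ε : ℝ) ≤ C * Real.exp (t * (1 + Real.log d) * (1 + Real.log ε⁻¹))

/-- The exponent `t*` of quasi-polynomial tractability. -/
noncomputable def qptExponent (Λ : ℕ → ℕ → ℝ) : ℝ :=
  sInf {t : ℝ | 0 < t ∧ ∃ C : ℝ, 0 < C ∧ ∀ d : ℕ, 1 ≤ d → ∀ ε : ℝ, ε ∈ Set.Ioo (0 : ℝ) 1 →
    (infoCount Λ d ε : ℝ) ≤ C * Real.exp (t * (1 + Real.log d) * (1 + Real.log ε⁻¹))}

/-- The filter describing `ε⁻¹ + d → ∞` over pairs `(ε, d)` with `ε ∈ (0,1)` and `d ≥ 1`. -/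
noncomputable def wtFilter : Filter (ℝ × ℕ) :=
  (Filter.comap (fun p : ℝ × ℕ => p.1⁻¹ + (p.2 : ℝ)) Filter.atTop) ⊓
    Filter.principal {p : ℝ × ℕ | p.1 ∈ Set.Ioo (0 : ℝ) 1 ∧ 1 ≤ p.2}

/-- `(s,t)`-weak tractability: `ln n(ε,d) / (ε^{-s} + d^t) → 0` as `ε⁻¹ + d → ∞`. -/
def IsWT (Λ : ℕ → ℕ → ℝ) (s t : ℝ) : Prop :=
  Filter.Tendsto
    (fun p : ℝ × ℕ => Real.log (infoCount Λ p.2 p.1) / (p.1 ^ (-s) + (p.2 : ℝ) ^ t))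
    wtFilter (nhds 0)

/-- Uniform weak tractability. -/
def IsUWT (Λ : ℕ → ℕ → ℝ) : Prop := ∀ s t : ℝ, 0 < s → 0 < t → IsWT Λ s t

/-- The problem suffers from the curse of dimensionality. -/
def SuffersCurse (Λ : ℕ → ℕ → ℝ) : Prop :=
  ∃ C ε₀ α : ℝ, 0 < C ∧ 0 < ε₀ ∧ 0 < α ∧ ∀ ε : ℝ, 0 < ε → ε ≤ ε₀ →
    {d : ℕ | C * (1 + α) ^ d ≤ (infoCount Λ d ε : ℝ)}.Infinite

/-- Condition (3) of Property (P) for a given `τ > 0`: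
`H(k,τ) = ∑_{j≥2} (λ(k,j)/λ(k,2))^τ` is finite for each `k` and
`sup_k H(k,τ) = H(1,τ)` (equivalently `H(k,τ) ≤ H(1,τ)` for all `k`). -/
def Cond3 (Λ : ℕ → ℕ → ℝ) (τ : ℝ) : Prop :=
  0 < τ ∧ (∀ k, Summable fun j : ℕ => (Λ k (j + 1) / Λ k 1) ^ τ) ∧
    ∀ k, (∑' j : ℕ, (Λ k (j + 1) / Λ k 1) ^ τ) ≤ ∑' j : ℕ, (Λ 0 (j + 1) / Λ 0 1) ^ τ

/-- `τ₀`: the infimum of all `τ` satisfying Condition (3). -/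
noncomputable def tau0 (Λ : ℕ → ℕ → ℝ) : ℝ := sInf {τ : ℝ | Cond3 Λ τ}

/-- Property (P): each sequence `λ(k,·)` is nonincreasing and nonnegative with `λ(k,1) = 1`
and `λ(k,2) > 0`, `h_k = λ(k,2)` is nonincreasing, and Condition (3) holds for some `τ > 0`. -/
structure PropertyP (Λ : ℕ → ℕ → ℝ) : Prop where
  nonneg : ∀ k j, 0 ≤ Λ k j
  anti : ∀ k, Antitone (Λ k)
  first : ∀ k, Λ k 0 = 1
  second_pos : ∀ k, 0 < Λ k 1
  h_anti : Antitone fun k => Λ k 1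
  cond3 : ∃ τ : ℝ, Cond3 Λ τ


/-- `ω_γ = 2γ²/(1+2γ²+√(1+4γ²))`, as a function of `c = γ²`. -/
noncomputable def omegaOf (c : ℝ) : ℝ := 2 * c / (1 + 2 * c + Real.sqrt (1 + 4 * c))

/-- Normalized eigenvalues of the Gaussian-kernel problem:
`λ(k,j)/λ(k,1) = ω_{γ_k}^{j-1}` (0-indexed: `gaussLam γsq k j = ω_{γ_{k+1}}^j`,
where `γsq k = γ_{k+1}²`). -/
noncomputable def gaussLam (γsq : ℕ → ℝ) (k j : ℕ) : ℝ := omegaOf (γsq k) ^ j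



noncomputable def Lfun (c : ℝ) : ℝ := Real.log ((1 + 2 * c + Real.sqrt (1 + 4 * c)) / (2 * c))

lemma omega_denom_pos {c : ℝ} (hc : 0 < c) : 0 < 1 + 2 * c + Real.sqrt (1 + 4 * c) := by
  positivity

lemma omega_pos {c : ℝ} (hc : 0 < c) : 0 < omegaOf c :=
  div_pos (by linarith) (omega_denom_pos hc)

lemma omega_lt_one {c : ℝ} (hc : 0 < c) : omegaOf c < 1 := by
  rw [omegaOf, div_lt_one (omega_denom_pos hc)]
  have := Real.sqrt_nonneg (1 + 4 * c); linarith

lemma omega_mono {c c' : ℝ} (hc : 0 < c) (h : c ≤ c') : omegaOf c ≤ omegaOf c' := by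
  have hc' : 0 < c' := lt_of_lt_of_le hc h
  rw [omegaOf, omegaOf, div_le_div_iff₀ (omega_denom_pos hc) (omega_denom_pos hc')]
  have key : c * Real.sqrt (1 + 4 * c') ≤ c' * Real.sqrt (1 + 4 * c) := by
    have e1 : c * Real.sqrt (1 + 4 * c') = Real.sqrt (c ^ 2 * (1 + 4 * c')) := by
      rw [Real.sqrt_mul (sq_nonneg c), Real.sqrt_sq hc.le]
    have e2 : c' * Real.sqrt (1 + 4 * c) = Real.sqrt (c' ^ 2 * (1 + 4 * c)) := by
      rw [Real.sqrt_mul (sq_nonneg c'), Real.sqrt_sq hc'.le]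
    rw [e1, e2]
    exact Real.sqrt_le_sqrt (by nlinarith [mul_nonneg (mul_nonneg hc.le hc'.le) (sub_nonneg.mpr h), mul_nonneg (sub_nonneg.mpr h) (by linarith : (0:ℝ) ≤ c + c')])
  nlinarith [Real.sqrt_nonneg (1 + 4 * c), Real.sqrt_nonneg (1 + 4 * c')]

lemma omega_eq_exp {c : ℝ} (hc : 0 < c) : omegaOf c = Real.exp (-(Lfun c)) := by
  have hd := omega_denom_pos hc
  rw [Lfun, Real.exp_neg, Real.exp_log (by positivity), inv_div, omegaOf]

lemma Lfun_pos {c : ℝ} (hc : 0 < c) : 0 < Lfun c := by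
  apply Real.log_pos
  rw [lt_div_iff₀ (by linarith)]
  have := Real.sqrt_nonneg (1 + 4 * c); linarith

lemma Lfun_anti {c c' : ℝ} (hc : 0 < c) (h : c ≤ c') : Lfun c' ≤ Lfun c := by
  have h1 := omega_mono hc h
  rw [omega_eq_exp hc, omega_eq_exp (lt_of_lt_of_le hc h)] at h1
  have := Real.exp_le_exp.mp h1
  linarith

/-- geometric partial sum bound -/
lemma mygeom_le {x : ℝ} (h0 : 0 ≤ x) (h1 : x < 1) (n : ℕ) :
    ∑ i ∈ Finset.range n, x ^ i ≤ (1 - x)⁻¹ := by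
  have hx : x ≠ 1 := ne_of_lt h1
  rw [geom_sum_eq hx, div_le_iff_of_neg (by linarith : x - 1 < 0)]
  have h2 : (0:ℝ) < 1 - x := by linarith
  have e : (1 - x)⁻¹ * (x - 1) = -1 := by field_simp; ring
  rw [e]
  linarith [pow_nonneg h0 n]


section
variable {γsq : ℕ → ℝ}

lemma setS_finite (hpos : ∀ k, 0 < γsq k) (hanti : Antitone γsq) (d : ℕ) {ε : ℝ}
    (hε0 : 0 < ε) (hε1 : ε < 1) :
    {j : Fin d → ℕ | ε ^ 2 < ∏ k : Fin d, gaussLam γsq k.val (j k)}.Finite := by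
  obtain ⟨n, hn⟩ : ∃ n : ℕ, omegaOf (γsq 0) ^ n < ε ^ 2 :=
    exists_pow_lt_of_lt_one (by positivity) (omega_lt_one (hpos 0))
  apply (Set.Finite.pi' (fun _ : Fin d => Set.finite_Iio n)).subset
  intro j hj
  simp only [Set.mem_setOf_eq] at hj ⊢
  intro k
  simp only [Set.mem_Iio]
  by_contra hk
  push_neg at hk
  have hωpos : ∀ i : Fin d, 0 < omegaOf (γsq i.val) := fun i => omega_pos (hpos _)
  have hω1 : ∀ i : Fin d, omegaOf (γsq i.val) < 1 := fun i => omega_lt_one (hpos _)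
  have h1 : ∏ i : Fin d, gaussLam γsq i.val (j i) ≤ gaussLam γsq k.val (j k) := by
    rw [← Finset.mul_prod_erase Finset.univ _ (Finset.mem_univ k)]
    have h2 : ∏ i ∈ Finset.univ.erase k, gaussLam γsq i.val (j i) ≤ 1 :=
      Finset.prod_le_one (fun i _ => pow_nonneg (hωpos i).le _)
        (fun i _ => pow_le_one₀ (hωpos i).le (hω1 i).le)
    have h3 : (0:ℝ) ≤ gaussLam γsq k.val (j k) := pow_nonneg (hωpos k).le _
    nlinarith
  have h2 : gaussLam γsq k.val (j k) ≤ omegaOf (γsq 0) ^ (j k) :=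
    pow_le_pow_left₀ (hωpos k).le (omega_mono (hpos _) (hanti (Nat.zero_le _))) _
  have h3 : omegaOf (γsq 0) ^ (j k) ≤ omegaOf (γsq 0) ^ n :=
    pow_le_pow_of_le_one (omega_pos (hpos 0)).le (omega_lt_one (hpos 0)).le hk
  linarith

lemma cheb (hpos : ∀ k, 0 < γsq k) (hanti : Antitone γsq) (d : ℕ) {ε τ : ℝ}
    (hε0 : 0 < ε) (hε1 : ε < 1) (hτ : 0 < τ) :
    (infoCount (gaussLam γsq) d ε : ℝ) ≤
      ε ^ (-(2 * τ)) * ∏ k : Fin d, (1 - omegaOf (γsq k.val) ^ τ)⁻¹ := by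
  set S := {j : Fin d → ℕ | ε ^ 2 < ∏ k : Fin d, gaussLam γsq k.val (j k)} with hS
  have hfin : S.Finite := setS_finite hpos hanti d hε0 hε1
  have hcard : (infoCount (gaussLam γsq) d ε : ℝ) = (hfin.toFinset.card : ℝ) := by
    rw [infoCount, Nat.card_coe_set_eq, Set.ncard_eq_toFinset_card S hfin]
  set x : Fin d → ℝ := fun k => omegaOf (γsq k.val) ^ τ with hx
  have hωpos : ∀ i : Fin d, 0 < omegaOf (γsq i.val) := fun i => omega_pos (hpos _)
  have hxpos : ∀ k, 0 < x k := fun k => Real.rpow_pos_of_pos (hωpos k) τ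
  have hx1 : ∀ k, x k < 1 := fun k =>
    Real.rpow_lt_one (hωpos k).le (omega_lt_one (hpos _)) hτ
  have swap : ∀ (y : ℝ), 0 < y → ∀ i : ℕ, (y ^ i) ^ τ = (y ^ τ) ^ i := by
    intro y hy i
    rw [← Real.rpow_natCast y i, ← Real.rpow_mul hy.le, mul_comm, Real.rpow_mul hy.le,
      Real.rpow_natCast]
  have key : ∀ j ∈ hfin.toFinset, ε ^ (2 * τ) ≤ ∏ k : Fin d, (x k) ^ (j k) := by
    intro j hj
    rw [Set.Finite.mem_toFinset] at hj
    have hj' : ε ^ 2 < ∏ k : Fin d, gaussLam γsq k.val (j k) := hj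
    have e1 : ε ^ (2 * τ) = (ε ^ 2) ^ τ := by
      rw [← Real.rpow_natCast ε 2, ← Real.rpow_mul hε0.le]
      norm_num
    have e2 : (∏ k : Fin d, gaussLam γsq k.val (j k)) ^ τ = ∏ k : Fin d, (x k) ^ (j k) := by
      simp only [gaussLam]
      rw [← Real.finset_prod_rpow _ _ (fun k _ => pow_nonneg (hωpos k).le _) τ]
      exact Finset.prod_congr rfl fun k _ => swap _ (hωpos k) (j k)
    rw [e1, ← e2]
    exact Real.rpow_le_rpow (by positivity) hj'.le hτ.le
  have step1 : (hfin.toFinset.card : ℝ) * ε ^ (2 * τ) ≤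
      ∑ j ∈ hfin.toFinset, ∏ k : Fin d, (x k) ^ (j k) := by
    have := Finset.card_nsmul_le_sum hfin.toFinset _ _ key
    rwa [nsmul_eq_mul] at this
  have step2 : ∑ j ∈ hfin.toFinset, ∏ k : Fin d, (x k) ^ (j k) ≤
      ∏ k : Fin d, (1 - x k)⁻¹ := by
    set F := hfin.toFinset
    have hF : F ⊆ Fintype.piFinset (fun _ : Fin d => Finset.range
        (1 + F.sup (fun j => Finset.univ.sup j))) := by
      intro j hj
      rw [Fintype.mem_piFinset]
      intro k
      rw [Finset.mem_range]
      have h1 : j k ≤ Finset.univ.sup j := Finset.le_sup (Finset.mem_univ k)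
      have h2 : Finset.univ.sup j ≤ F.sup (fun j => Finset.univ.sup j) := Finset.le_sup hj
      omega
    calc ∑ j ∈ F, ∏ k : Fin d, (x k) ^ (j k)
        ≤ ∑ j ∈ Fintype.piFinset (fun _ : Fin d => Finset.range
            (1 + F.sup (fun j => Finset.univ.sup j))), ∏ k : Fin d, (x k) ^ (j k) :=
          Finset.sum_le_sum_of_subset_of_nonneg hF
            (fun j _ _ => Finset.prod_nonneg fun k _ => pow_nonneg (hxpos k).le _)
      _ = ∏ k : Fin d, ∑ i ∈ Finset.range (1 + F.sup (fun j => Finset.univ.sup j)), (x k) ^ i :=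
          (Finset.prod_univ_sum _ _).symm
      _ ≤ ∏ k : Fin d, (1 - x k)⁻¹ :=
          Finset.prod_le_prod
            (fun k _ => Finset.sum_nonneg fun i _ => pow_nonneg (hxpos k).le i)
            (fun k _ => mygeom_le (hxpos k).le (hx1 k) _)
  have hεp : 0 < ε ^ (2 * τ) := Real.rpow_pos_of_pos hε0 _
  rw [hcard, Real.rpow_neg hε0.le, inv_mul_eq_div, le_div_iff₀ hεp]
  exact le_trans step1 step2

end


section
variable {γsq : ℕ → ℝ}

lemma upper_main (hpos : ∀ k, 0 < γsq k) (hanti : Antitone γsq) {t L' : ℝ} {K : ℕ}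
    (ht : 0 < t) (htL : 2 ≤ t * L') (hK : ∀ k, K ≤ k → L' ≤ Lfun (γsq k)) :
    ∀ d : ℕ, 1 ≤ d → ∀ ε : ℝ, ε ∈ Set.Ioo (0 : ℝ) 1 →
      (infoCount (gaussLam γsq) d ε : ℝ) ≤
        Real.exp ((K + 1) / (1 - Real.exp (-(t / 2 * Lfun (γsq 0))))) *
          Real.exp (t * (1 + Real.log d) * (1 + Real.log ε⁻¹)) := by
  intro d hd ε hε
  obtain ⟨hε0, hε1⟩ := hε
  have hdpos : (0:ℝ) < (d:ℝ) := by exact_mod_cast Nat.lt_of_lt_of_le Nat.zero_lt_one hd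
  have hd1 : (1:ℝ) ≤ (d:ℝ) := by exact_mod_cast hd
  have hlogd : 0 ≤ Real.log d := Real.log_nonneg hd1
  set τ : ℝ := t / 2 * (1 + Real.log d) with hτdef
  have hτ : 0 < τ := by positivity
  have hτt : t / 2 ≤ τ := le_mul_of_one_le_right (by positivity) (by linarith)
  have hL0 : 0 < Lfun (γsq 0) := Lfun_pos (hpos 0)
  have hLk : ∀ k : ℕ, Lfun (γsq 0) ≤ Lfun (γsq k) :=
    fun k => Lfun_anti (hpos k) (hanti (Nat.zero_le k))
  have hL' : 0 < L' := by nlinarith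
  set x0 : ℝ := Real.exp (-(t / 2 * Lfun (γsq 0))) with hx0def
  have hx0pos : 0 < x0 := Real.exp_pos _
  have hx01 : x0 < 1 := Real.exp_lt_one_iff.mpr (by nlinarith)
  have hb : 0 < 1 - x0 := by linarith
  set x : Fin d → ℝ := fun k => omegaOf (γsq k.val) ^ τ with hxdef
  have hxval : ∀ k : Fin d, x k = Real.exp (-(τ * Lfun (γsq k.val))) := by
    intro k
    rw [hxdef]
    simp only
    rw [omega_eq_exp (hpos _), ← Real.exp_mul]
    ring_nf
  have hxpos : ∀ k, 0 < x k := fun k => Real.rpow_pos_of_pos (omega_pos (hpos _)) τ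
  have hxle : ∀ k, x k ≤ x0 := by
    intro k
    rw [hxval k, hx0def]
    apply Real.exp_le_exp.mpr
    have : t / 2 * Lfun (γsq 0) ≤ τ * Lfun (γsq k.val) :=
      mul_le_mul hτt (hLk _) hL0.le hτ.le
    linarith
  -- single factor bound
  have hfac : ∀ k : Fin d, (1 - x k)⁻¹ ≤ Real.exp (x k / (1 - x0)) := by
    intro k
    have ha : 0 < 1 - x k := by linarith [hxle k]
    have hlog := Real.log_le_sub_one_of_pos (inv_pos.mpr ha)
    have he : (1 - x k)⁻¹ - 1 = x k / (1 - x k) := by field_simp; ring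
    have hc : x k / (1 - x k) ≤ x k / (1 - x0) :=
      div_le_div_of_nonneg_left (hxpos k).le hb (by linarith [hxle k])
    calc (1 - x k)⁻¹ = Real.exp (Real.log (1 - x k)⁻¹) := (Real.exp_log (inv_pos.mpr ha)).symm
      _ ≤ Real.exp (x k / (1 - x0)) := Real.exp_le_exp.mpr (by linarith)
  -- sum bound
  have hsum : ∑ k : Fin d, x k ≤ (K : ℝ) + 1 := by
    have hstep : ∀ k : Fin d, x k ≤
        (if (k : ℕ) < K then (1:ℝ) else 0) + Real.exp (-(τ * L')) := by
      intro k
      by_cases hk : (k : ℕ) < K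
      · simp only [hk, if_true]
        have : x k ≤ 1 := by
          rw [hxval k]
          apply Real.exp_le_one_iff.mpr
          have := hLk (k : ℕ)
          nlinarith
        have := (Real.exp_pos (-(τ * L'))).le
        linarith
      · simp only [hk, if_false, zero_add]
        rw [hxval k]
        apply Real.exp_le_exp.mpr
        have hLL : L' ≤ Lfun (γsq k.val) := hK _ (Nat.le_of_not_lt hk)
        nlinarith
    calc ∑ k : Fin d, x k
        ≤ ∑ k : Fin d, ((if (k : ℕ) < K then (1:ℝ) else 0) + Real.exp (-(τ * L'))) :=
          Finset.sum_le_sum fun k _ => hstep k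
      _ = (∑ k : Fin d, (if (k : ℕ) < K then (1:ℝ) else 0)) + (d : ℝ) * Real.exp (-(τ * L')) := by
          rw [Finset.sum_add_distrib, Finset.sum_const, Finset.card_univ, Fintype.card_fin,
            nsmul_eq_mul]
      _ ≤ (K : ℝ) + 1 := by
          have h1 : (∑ k : Fin d, (if (k : ℕ) < K then (1:ℝ) else 0)) ≤ (K : ℝ) := by
            rw [Finset.sum_boole]
            have hcard : (Finset.univ.filter (fun k : Fin d => (k : ℕ) < K)).card ≤ K := by
              have h := Finset.card_le_card_of_injOn (f := fun k : Fin d => (k : ℕ))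
                (s := Finset.univ.filter (fun k : Fin d => (k : ℕ) < K))
                (t := Finset.range K)
                (fun k hk => Finset.mem_range.mpr (Finset.mem_filter.mp hk).2)
                (Fin.val_injective.injOn)
              simpa using h
            exact_mod_cast hcard
          have h2 : (d : ℝ) * Real.exp (-(τ * L')) ≤ 1 := by
            have hτL : 1 + Real.log d ≤ τ * L' := by nlinarith
            have h3 : Real.exp (-(τ * L')) ≤ (Real.exp 1 * d)⁻¹ := by
              rw [← Real.exp_log hdpos, ← Real.exp_add, ← Real.exp_neg]
              exact Real.exp_le_exp.mpr (by linarith)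
            calc (d : ℝ) * Real.exp (-(τ * L')) ≤ (d : ℝ) * (Real.exp 1 * d)⁻¹ :=
                  mul_le_mul_of_nonneg_left h3 hdpos.le
              _ = (Real.exp 1)⁻¹ := by
                  field_simp
              _ ≤ 1 := inv_le_one_of_one_le₀ (Real.one_le_exp (by norm_num))
          linarith
  -- product bound
  have hprod : ∏ k : Fin d, (1 - x k)⁻¹ ≤
      Real.exp (((K : ℝ) + 1) / (1 - x0)) := by
    calc ∏ k : Fin d, (1 - x k)⁻¹
        ≤ ∏ k : Fin d, Real.exp (x k / (1 - x0)) :=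
          Finset.prod_le_prod (fun k _ => (inv_pos.mpr (by linarith [hxle k])).le)
            (fun k _ => hfac k)
      _ = Real.exp (∑ k : Fin d, x k / (1 - x0)) := (Real.exp_sum _ _).symm
      _ ≤ Real.exp (((K : ℝ) + 1) / (1 - x0)) := by
          apply Real.exp_le_exp.mpr
          rw [← Finset.sum_div]
          gcongr
  have hchb := cheb hpos hanti d hε0 hε1 hτ
  have hE : 0 < Real.log ε⁻¹ := by
    rw [Real.log_inv]
    linarith [Real.log_neg hε0 hε1]
  have hrw : ε ^ (-(2 * τ)) = Real.exp (t * (1 + Real.log d) * Real.log ε⁻¹) := by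
    rw [Real.rpow_def_of_pos hε0, Real.log_inv, hτdef]
    congr 1
    ring
  calc (infoCount (gaussLam γsq) d ε : ℝ)
      ≤ ε ^ (-(2 * τ)) * ∏ k : Fin d, (1 - omegaOf (γsq k.val) ^ τ)⁻¹ := hchb
    _ ≤ Real.exp (t * (1 + Real.log d) * Real.log ε⁻¹) *
          Real.exp (((K : ℝ) + 1) / (1 - x0)) := by
        rw [hrw]
        exact mul_le_mul_of_nonneg_left hprod (Real.exp_pos _).le
    _ ≤ Real.exp ((K + 1) / (1 - Real.exp (-(t / 2 * Lfun (γsq 0))))) *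
          Real.exp (t * (1 + Real.log d) * (1 + Real.log ε⁻¹)) := by
        rw [mul_comm]
        apply mul_le_mul_of_nonneg_left _ (Real.exp_pos _).le
        apply Real.exp_le_exp.mpr
        nlinarith

end


open Classical in
noncomputable def indJ (s m : ℕ) (f : Fin s → Fin m) : Fin (s * m) → ℕ :=
  fun k => if ∃ i : Fin s, (k : ℕ) = (f i : ℕ) + (i : ℕ) * m then 1 else 0

lemma indJ_div (s m : ℕ) (hm : 0 < m) (f : Fin s → Fin m) (i : Fin s) :
    ((f i : ℕ) + (i : ℕ) * m) / m = (i : ℕ) := by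
  rw [Nat.add_mul_div_right _ _ hm, Nat.div_eq_of_lt (f i).isLt, zero_add]

lemma indJ_le_one (s m : ℕ) (f : Fin s → Fin m) (k : Fin (s * m)) : indJ s m f k ≤ 1 := by
  rw [indJ]
  split <;> omega

lemma indJ_sum_le (s m : ℕ) (hm : 0 < m) (f : Fin s → Fin m) :
    ∑ k : Fin (s * m), indJ s m f k ≤ s := by
  classical
  set P : Fin (s * m) → Prop := fun k => ∃ i : Fin s, (k : ℕ) = (f i : ℕ) + (i : ℕ) * m with hP
  have h1 : ∑ k : Fin (s * m), indJ s m f k = ∑ k ∈ Finset.univ.filter P, indJ s m f k := by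
    refine (Finset.sum_filter_of_ne ?_).symm
    intro k _ hne
    rw [indJ] at hne
    by_contra hcon
    rw [if_neg hcon] at hne
    exact hne rfl
  have h2 : ∑ k ∈ Finset.univ.filter P, indJ s m f k ≤ ∑ _k ∈ Finset.univ.filter P, 1 :=
    Finset.sum_le_sum fun k _ => indJ_le_one s m f k
  have h3 : (Finset.univ.filter P).card ≤ s := by
    have h := Finset.card_le_card_of_injOn (f := fun k : Fin (s * m) => (k : ℕ) / m)
      (s := Finset.univ.filter P) (t := Finset.range s)
      (fun k hk => by
        obtain ⟨i, hi⟩ := (Finset.mem_filter.mp hk).2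
        show (k : ℕ) / m ∈ Finset.range s
        rw [Finset.mem_range, hi, indJ_div s m hm f i]
        exact i.isLt)
      (fun k1 hk1 k2 hk2 heq => by
        have p1 : P k1 := by simpa using hk1
        have p2 : P k2 := by simpa using hk2
        obtain ⟨i1, hi1⟩ := p1
        obtain ⟨i2, hi2⟩ := p2
        have heq' : (k1 : ℕ) / m = (k2 : ℕ) / m := heq
        rw [hi1, hi2, indJ_div s m hm f i1, indJ_div s m hm f i2] at heq'
        have : i1 = i2 := Fin.ext heq'
        apply Fin.ext
        rw [hi1, hi2, this])
    simpa using h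
  calc ∑ k : Fin (s * m), indJ s m f k ≤ ∑ _k ∈ Finset.univ.filter P, 1 := h1 ▸ h2
    _ = (Finset.univ.filter P).card := by simp
    _ ≤ s := h3

lemma indJ_inj (s m : ℕ) (hm : 0 < m) : Function.Injective (indJ s m) := by
  intro f g hfg
  funext i
  have hbound : (f i : ℕ) + (i : ℕ) * m < s * m := by
    have h1 : (f i : ℕ) < m := (f i).isLt
    have h2 : (i : ℕ) + 1 ≤ s := i.isLt
    calc (f i : ℕ) + (i : ℕ) * m < m + (i : ℕ) * m := by omega
      _ = ((i : ℕ) + 1) * m := by ring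
      _ ≤ s * m := Nat.mul_le_mul_right m h2
  set k : Fin (s * m) := ⟨(f i : ℕ) + (i : ℕ) * m, hbound⟩ with hk
  have h1 : indJ s m f k = 1 := by
    rw [indJ]
    exact if_pos ⟨i, rfl⟩
  have h2 : indJ s m g k = 1 := by rw [← hfg]; exact h1
  have hex : ∃ i' : Fin s, (k : ℕ) = (g i' : ℕ) + (i' : ℕ) * m := by
    by_contra hcon
    rw [indJ, if_neg hcon] at h2
    exact absurd h2 (by omega)
  obtain ⟨i', hi'⟩ := hex
  have hkv : (k : ℕ) = (f i : ℕ) + (i : ℕ) * m := rfl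
  have hii : (i : ℕ) = (i' : ℕ) := by
    have e1 := indJ_div s m hm f i
    have e2 := indJ_div s m hm g i'
    rw [← hkv] at e1
    rw [← hi'] at e2
    exact e1.symm.trans e2
  have h3 : (f i : ℕ) + (i : ℕ) * m = (g i' : ℕ) + (i' : ℕ) * m := hkv.symm.trans hi'
  rw [hii] at h3
  have hfg' : (f i : ℕ) = (g i' : ℕ) := Nat.add_right_cancel h3
  have : i' = i := Fin.ext hii.symm
  subst this
  exact Fin.ext hfg'

section
variable {γsq : ℕ → ℝ}

lemma count_lower (hpos : ∀ k, 0 < γsq k) (hanti : Antitone γsq) {Lb : ℝ}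
    (hLb : ∀ k, Lfun (γsq k) ≤ Lb) {ε : ℝ} (hε0 : 0 < ε) (hε1 : ε < 1)
    {s m : ℕ} (hs : 1 ≤ s) (hm : 1 ≤ m) (hsL : (s : ℝ) * Lb < 2 * Real.log ε⁻¹) :
    (m : ℝ) ^ s ≤ (infoCount (gaussLam γsq) (s * m) ε : ℝ) := by
  classical
  have hLbpos : 0 < Lb := lt_of_lt_of_le (Lfun_pos (hpos 0)) (hLb 0)
  set S := {j : Fin (s * m) → ℕ | ε ^ 2 < ∏ k : Fin (s * m), gaussLam γsq k.val (j k)} with hS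
  have hfin : S.Finite := setS_finite hpos hanti (s * m) hε0 hε1
  have hmem : ∀ f : Fin s → Fin m, indJ s m f ∈ S := by
    intro f
    rw [hS, Set.mem_setOf_eq]
    have hfac : ∀ k : Fin (s * m),
        Real.exp (-Lb) ^ (indJ s m f k) ≤ gaussLam γsq k.val (indJ s m f k) := by
      intro k
      apply pow_le_pow_left₀ (Real.exp_pos _).le
      rw [omega_eq_exp (hpos _)]
      exact Real.exp_le_exp.mpr (neg_le_neg (hLb _))
    have h1 : Real.exp (-Lb) ^ s ≤ ∏ k : Fin (s * m), gaussLam γsq k.val (indJ s m f k) := by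
      calc Real.exp (-Lb) ^ s ≤ Real.exp (-Lb) ^ (∑ k : Fin (s * m), indJ s m f k) :=
            pow_le_pow_of_le_one (Real.exp_pos _).le
              (Real.exp_le_one_iff.mpr (by linarith)) (indJ_sum_le s m hm f)
        _ = ∏ k : Fin (s * m), Real.exp (-Lb) ^ (indJ s m f k) :=
            (Finset.prod_pow_eq_pow_sum _ _ _).symm
        _ ≤ ∏ k : Fin (s * m), gaussLam γsq k.val (indJ s m f k) :=
            Finset.prod_le_prod (fun k _ => pow_nonneg (Real.exp_pos _).le _)
              (fun k _ => hfac k)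
    have h2 : ε ^ 2 < Real.exp (-Lb) ^ s := by
      have e1 : ε ^ 2 = Real.exp (2 * Real.log ε) := by
        rw [← Real.exp_log (pow_pos hε0 2), Real.log_pow]
        norm_num
      have e2 : Real.exp (-Lb) ^ s = Real.exp ((s : ℝ) * (-Lb)) :=
        (Real.exp_nat_mul (-Lb) s).symm
      rw [e1, e2]
      apply Real.exp_lt_exp.mpr
      rw [Real.log_inv] at hsL
      nlinarith
    linarith
  haveI : Finite ↑S := hfin.to_subtype
  have hinj : Function.Injective (fun f : Fin s → Fin m => (⟨indJ s m f, hmem f⟩ : ↑S)) :=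
    fun f g h => indJ_inj s m hm (congrArg Subtype.val h)
  have hcard := Nat.card_le_card_of_injective _ hinj
  have hc1 : Nat.card (Fin s → Fin m) = m ^ s := by
    rw [Nat.card_eq_fintype_card, Fintype.card_fun]
    simp
  rw [hc1] at hcard
  have : (infoCount (gaussLam γsq) (s * m) ε : ℕ) = Nat.card ↑S := rfl
  rw [this]
  exact_mod_cast hcard

end

section
variable {γsq : ℕ → ℝ}

lemma lower_final (hpos : ∀ k, 0 < γsq k) (hanti : Antitone γsq) {Lb t C : ℝ}
    (hLb : ∀ k, Lfun (γsq k) ≤ Lb) (ht : 0 < t) (hC : 0 < C)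
    (hbd : ∀ d : ℕ, 1 ≤ d → ∀ ε : ℝ, ε ∈ Set.Ioo (0 : ℝ) 1 →
      (infoCount (gaussLam γsq) d ε : ℝ) ≤
        C * Real.exp (t * (1 + Real.log d) * (1 + Real.log ε⁻¹))) :
    2 / Lb ≤ t := by
  have hLbpos : 0 < Lb := lt_of_lt_of_le (Lfun_pos (hpos 0)) (hLb 0)
  -- Claim 1
  have claim1 : ∀ ε : ℝ, 0 < ε → ε < 1 → ∀ s : ℕ, 1 ≤ s →
      (s : ℝ) * Lb < 2 * Real.log ε⁻¹ → (s : ℝ) ≤ t * (1 + Real.log ε⁻¹) := by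
    intro ε hε0 hε1 s hs hsL
    by_contra hcon
    push_neg at hcon
    set E := Real.log ε⁻¹ with hE
    have hEpos : 0 < E := by
      rw [hE, Real.log_inv]
      linarith [Real.log_neg hε0 hε1]
    set a := (s : ℝ) - t * (1 + E) with ha
    have hapos : 0 < a := by rw [ha]; linarith
    set B := Real.log C + t * (1 + Real.log s) * (1 + E) with hB
    have hmex : ∃ m : ℕ, 1 ≤ m ∧ B / a < Real.log m := by
      refine ⟨⌊Real.exp (B / a)⌋₊ + 1, Nat.le_add_left 1 _, ?_⟩
      have h1 : Real.exp (B / a) < ((⌊Real.exp (B / a)⌋₊ + 1 : ℕ) : ℝ) := by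
        push_cast
        exact Nat.lt_floor_add_one _
      calc B / a = Real.log (Real.exp (B / a)) := (Real.log_exp _).symm
        _ < _ := Real.log_lt_log (Real.exp_pos _) h1
    obtain ⟨m, hm1, hmB⟩ := hmex
    have hmpos : (0 : ℝ) < (m : ℝ) := by exact_mod_cast hm1
    have hspos : (0 : ℝ) < (s : ℝ) := by exact_mod_cast hs
    have hcount := count_lower hpos hanti hLb hε0 hε1 hs hm1 hsL
    have hbd' := hbd (s * m) (Nat.one_le_iff_ne_zero.mpr (by positivity)) ε ⟨hε0, hε1⟩
    have hkey : (m : ℝ) ^ s ≤ C * Real.exp (t * (1 + Real.log (s * m : ℕ)) * (1 + E)) :=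
      le_trans hcount hbd'
    have hlogcast : Real.log ((s * m : ℕ) : ℝ) = Real.log s + Real.log m := by
      push_cast
      exact Real.log_mul (ne_of_gt hspos) (ne_of_gt hmpos)
    have hlog : (s : ℝ) * Real.log m ≤
        Real.log C + t * (1 + Real.log s + Real.log m) * (1 + E) := by
      have h1 := Real.log_le_log (pow_pos hmpos s) hkey
      rw [Real.log_pow, Real.log_mul (ne_of_gt hC) (ne_of_gt (Real.exp_pos _)),
        Real.log_exp, hlogcast] at h1
      calc (s : ℝ) * Real.log m = (s : ℕ) * Real.log m := by norm_num
        _ ≤ Real.log C + t * (1 + (Real.log s + Real.log m)) * (1 + E) := h1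
        _ = Real.log C + t * (1 + Real.log s + Real.log m) * (1 + E) := by ring
    have hexp : t * (1 + Real.log s + Real.log m) * (1 + E) =
        t * (1 + Real.log s) * (1 + E) + t * (1 + E) * Real.log m := by ring
    have haB : B < a * Real.log m := by
      rw [mul_comm]
      exact (div_lt_iff₀ hapos).mp hmB
    rw [ha, hB] at *
    nlinarith
  -- Claim 2
  have claim2 : ∀ E : ℝ, 0 < E → 2 * E / Lb ≤ t * (1 + E) + 2 := by
    intro E hEpos
    set ε := Real.exp (-E) with hε
    have hε0 : 0 < ε := Real.exp_pos _
    have hε1 : ε < 1 := Real.exp_lt_one_iff.mpr (by linarith)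
    have hEinv : Real.log ε⁻¹ = E := by
      rw [hε, Real.exp_neg, inv_inv, Real.log_exp]
    set s : ℕ := ⌊2 * E / Lb⌋₊ with hs
    have hs1 : (s : ℝ) ≤ 2 * E / Lb := Nat.floor_le (by positivity)
    have hs2 : 2 * E / Lb < (s : ℝ) + 1 := Nat.lt_floor_add_one _
    by_cases hss : 2 ≤ s
    · have h1s : 1 ≤ s - 1 := by omega
      have hcast : ((s - 1 : ℕ) : ℝ) = (s : ℝ) - 1 := by
        push_cast [Nat.cast_sub (by omega : 1 ≤ s)]
        ring
      have hmul : (2 * E / Lb) * Lb = 2 * E := div_mul_cancel₀ _ (ne_of_gt hLbpos)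
      have hlt : ((s - 1 : ℕ) : ℝ) * Lb < 2 * Real.log ε⁻¹ := by
        rw [hcast, hEinv]
        nlinarith
      have := claim1 ε hε0 hε1 (s - 1) h1s hlt
      rw [hcast, hEinv] at this
      linarith
    · have : (s : ℝ) ≤ 1 := by
        have : s ≤ 1 := by omega
        exact_mod_cast this
      nlinarith
  -- conclusion
  apply le_of_forall_pos_le_add
  intro δ hδ
  have hEp : 0 < (t + 2) / δ := by positivity
  have h2 := claim2 ((t + 2) / δ) hEp
  set E := (t + 2) / δ with hEdef
  have hδE : δ * E = t + 2 := by
    rw [hEdef]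
    field_simp
  have h3 : 2 / Lb * E ≤ (t + δ) * E := by
    have e : 2 * E / Lb = 2 / Lb * E := by ring
    nlinarith
  have := le_of_mul_le_mul_right (by linarith : 2 / Lb * E ≤ (t + δ) * E) hEp
  linarith

end


/-- Gaussian kernels, normalized error criterion: QPT holds for all shape parameters, with
exponent of QPT equal to `2 / lim ln((1+2γ_k²+√(1+4γ_k²))/(2γ_k²))` (the limit exists in
`(0,∞]` by monotonicity and equals the limsup used here; when it is `∞` the exponent is
`0` via `EReal.toReal ⊤ = 0` and `2/0 = 0`). -/
theorem gauss_qpt (γsq : ℕ → ℝ) (hpos : ∀ k, 0 < γsq k) (hanti : Antitone γsq) :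
    IsQPT (gaussLam γsq) ∧
      qptExponent (gaussLam γsq) =
        2 / (Filter.limsup
          (fun k : ℕ =>
            (Real.log ((1 + 2 * γsq k + Real.sqrt (1 + 4 * γsq k)) / (2 * γsq k)) : EReal))
          Filter.atTop).toReal := by
  classical
  set L : ℕ → ℝ := fun k => Lfun (γsq k) with hLdef
  have hLmono : Monotone L := fun a b hab => Lfun_anti (hpos b) (hanti hab)
  have hLpos : ∀ k, 0 < L k := fun k => Lfun_pos (hpos k)
  set S : EReal := ⨆ k, ((L k : ℝ) : EReal) with hSdef
  have hlimsup : Filter.limsup (fun k : ℕ =>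
      ((Real.log ((1 + 2 * γsq k + Real.sqrt (1 + 4 * γsq k)) / (2 * γsq k))) : EReal))
      Filter.atTop = S := by
    have hfun : (fun k : ℕ =>
        ((Real.log ((1 + 2 * γsq k + Real.sqrt (1 + 4 * γsq k)) / (2 * γsq k))) : EReal)) =
        fun k : ℕ => ((L k : ℝ) : EReal) := rfl
    rw [hfun, limsup_eq_iInf_iSup_of_nat, hSdef]
    apply le_antisymm
    · exact iInf_le_of_le 0
        (iSup_le fun i => iSup_le fun _ => le_iSup (fun k => ((L k : ℝ) : EReal)) i)
    · refine le_iInf fun n => iSup_le fun i => ?_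
      refine le_trans (EReal.coe_le_coe_iff.mpr (hLmono (le_max_left i n))) ?_
      exact le_iSup₂ (f := fun j (_ : j ≥ n) => ((L j : ℝ) : EReal)) (max i n) (le_max_right i n)
  set T : Set ℝ := {t : ℝ | 0 < t ∧ ∃ C : ℝ, 0 < C ∧ ∀ d : ℕ, 1 ≤ d → ∀ ε : ℝ,
      ε ∈ Set.Ioo (0 : ℝ) 1 → (infoCount (gaussLam γsq) d ε : ℝ) ≤
        C * Real.exp (t * (1 + Real.log d) * (1 + Real.log ε⁻¹))} with hTdef
  have hmemT : ∀ t : ℝ, 0 < t → ((2 / t : ℝ) : EReal) < S → t ∈ T := by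
    intro t ht hlt
    rw [hSdef, lt_iSup_iff] at hlt
    obtain ⟨K, hK⟩ := hlt
    have hK' : 2 / t < L K := EReal.coe_lt_coe_iff.mp hK
    have htL : 2 ≤ t * L K := by
      rw [div_lt_iff₀ ht] at hK'
      nlinarith
    refine ⟨ht, Real.exp (((K : ℝ) + 1) / (1 - Real.exp (-(t / 2 * Lfun (γsq 0))))),
      Real.exp_pos _, ?_⟩
    exact upper_main hpos hanti ht htL (fun k hk => hLmono hk)
  have hTlb0 : ∀ t ∈ T, (0:ℝ) ≤ t := fun t htT => htT.1.le
  have hq : qptExponent (gaussLam γsq) = sInf T := rfl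
  by_cases hStop : S = ⊤
  · have hmem' : ∀ t : ℝ, 0 < t → t ∈ T := fun t ht =>
      hmemT t ht (by rw [hStop]; exact EReal.coe_lt_top _)
    constructor
    · obtain ⟨ht1, C, hC, hb⟩ := hmem' 1 one_pos
      exact ⟨C, 1, hC, one_pos, hb⟩
    · rw [hlimsup, hStop, EReal.toReal_top, div_zero, hq]
      apply le_antisymm
      · apply le_of_forall_pos_le_add
        intro δ hδ
        have := csInf_le ⟨0, hTlb0⟩ (hmem' δ hδ)
        linarith
      · exact le_csInf ⟨1, hmem' 1 one_pos⟩ hTlb0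
  · have hSbot : S ≠ ⊥ := by
      have h1 : ((L 0 : ℝ) : EReal) ≤ S := le_iSup (fun k => ((L k : ℝ) : EReal)) 0
      exact (lt_of_lt_of_le (EReal.bot_lt_coe _) h1).ne'
    set M : ℝ := S.toReal with hMdef
    have hSM : S = ((M : ℝ) : EReal) := (EReal.coe_toReal hStop hSbot).symm
    have hMub : ∀ k, L k ≤ M := by
      intro k
      have h1 : ((L k : ℝ) : EReal) ≤ S := le_iSup (fun k => ((L k : ℝ) : EReal)) k
      rw [hSM] at h1
      exact EReal.coe_le_coe_iff.mp h1
    have hM0 : 0 < M := lt_of_lt_of_le (hLpos 0) (hMub 0)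
    have hupper : ∀ t : ℝ, 2 / M < t → t ∈ T := by
      intro t htg
      have ht : 0 < t := lt_trans (div_pos two_pos hM0) htg
      apply hmemT t ht
      rw [hSM]
      have h2t : 2 / t < M := by
        rw [div_lt_iff₀ ht]
        rw [div_lt_iff₀ hM0] at htg
        nlinarith
      exact_mod_cast h2t
    have hlow : ∀ t ∈ T, 2 / M ≤ t := by
      rintro t ⟨ht, C, hC, hb⟩
      exact lower_final hpos hanti hMub ht hC hb
    constructor
    · obtain ⟨ht1, C, hC, hb⟩ := hupper (2 / M + 1) (by linarith)
      exact ⟨C, 2 / M + 1, hC, ht1, hb⟩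
    · rw [hlimsup, hq, ← hMdef]
      apply le_antisymm
      · apply le_of_forall_pos_le_add
        intro δ hδ
        have := csInf_le ⟨0, hTlb0⟩ (hupper (2 / M + δ) (by linarith))
        linarith
      · exact le_csInf ⟨2 / M + 1, hupper _ (by linarith)⟩ hlow
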